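/- Let P and P_ε be Markov kernels on X with π stationary for P, P acting on L²(π) through T_P and L²(π)-geometrically ergodic with rate 1−α, P_ε acting on L²(π) through T_ε, ‖T_P − T_ε‖ ≤ ε, and 0 < ε < α. Suppose P_ε has a stationary probability measure π_ε with π_ε ≪ π and π ≪ π_ε, and that πP_εⁿ → π_ε in total variation. Then: (i) dπ_ε/dπ ∈ L²(π) with 1 ≤ ‖π_ε‖₂ ≤ α/√(α² − ε²); (ii) ‖π − π_ε‖₂ ≤ ε/√(α² − ε²); and (iii) for every probability measure μ ≪ π with dμ/dπ ∈ L²(π) and every n ∈ ℕ, ‖μP_εⁿ − π_ε‖₂ ≤ (1−(α−ε))ⁿ ‖μ − π_ε‖₂. -/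

import Mathlib

open MeasureTheory ProbabilityTheory Filter ENNReal

variable {X : Type*} [MeasurableSpace X]

/-- The real-valued Radon–Nikodym density of `μ` with respect to `π`. -/
noncomputable def rnd (π μ : Measure X) (x : X) : ℝ := (μ.rnDeriv π x).toReal

/-- `n`-fold action of the kernel `P` on the measure `μ`, i.e. `μPⁿ`. -/
noncomputable def mIter (P : Kernel X X) (n : ℕ) (μ : Measure X) : Measure X :=
  (fun ν => ν.bind (fun x => P x))^[n] μ

/-- `n`-fold composition of the kernel `P`, i.e. `Pⁿ`. -/
noncomputable def kpow (P : Kernel X X) : ℕ → Kernel X X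
  | 0 => Kernel.id
  | n + 1 => (kpow P n).comp P

/-- `‖μ − ν‖₂`, the `L²(π)` distance between the `π`-densities of `μ` and `ν`. -/
noncomputable def d2 (π μ ν : Measure X) : ℝ :=
  (eLpNorm (fun x => rnd π μ x - rnd π ν x) 2 π).toReal

/-- `‖μ − ν‖₁`, the `L¹(π)` distance between the `π`-densities of `μ` and `ν`. -/
noncomputable def d1 (π μ ν : Measure X) : ℝ := ∫ x, |rnd π μ x - rnd π ν x| ∂π

/-- `P` acts on `L²(π)` through the bounded linear operator `T`:
for every probability measure `μ ≪ π` with `dμ/dπ ∈ L²(π)`,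
`T(dμ/dπ)` is a version of `d(μP)/dπ`. -/
def ActsOn (π : Measure X) (P : Kernel X X) (T : Lp ℝ 2 π →L[ℝ] Lp ℝ 2 π) : Prop :=
  ∀ μ : Measure X, IsProbabilityMeasure μ → μ ≪ π →
    ∀ h : MemLp (rnd π μ) 2 π,
      ⇑(T (h.toLp (rnd π μ))) =ᵐ[π] rnd π (μ.bind (fun x => P x))

/-- `L²(π)`-geometric ergodicity with rate `1 − α`:
`T` contracts mean-zero functions by the factor `1 − α`. -/
def IsGeomErg (π : Measure X) (T : Lp ℝ 2 π →L[ℝ] Lp ℝ 2 π) (α : ℝ) : Prop :=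
  ∀ f : Lp ℝ 2 π, ∫ x, f x ∂π = 0 → ‖T f‖ ≤ (1 - α) * ‖f‖

/-- Reversibility of `P` with respect to `π`. -/
def Reversible (π : Measure X) (P : Kernel X X) : Prop :=
  ∀ A B : Set X, MeasurableSet A → MeasurableSet B →
    ∫⁻ x in A, P x B ∂π = ∫⁻ x in B, P x A ∂π

/-- `∫ h dPᵏ(x,·)`, the `k`-step forward operator applied to `h`. -/
noncomputable def kInt (P : Kernel X X) (k : ℕ) (h : X → ℝ) (x : X) : ℝ :=
  ∫ y, h y ∂(kpow P k x)

/-- `μPᵏh = ∫∫ h(y) Pᵏ(x,dy) μ(dx)`. -/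
noncomputable def mkInt (P : Kernel X X) (μ : Measure X) (k : ℕ) (h : X → ℝ) : ℝ :=
  ∫ x, kInt P k h x ∂μ

/-- Path covariance `Cov_μ(f(X_t), g(X_{t+s}))` of the chain with kernel `P` started at `μ`. -/
noncomputable def covPath (P : Kernel X X) (μ : Measure X) (t s : ℕ) (f g : X → ℝ) : ℝ :=
  ∫ x, (∫ y, (∫ z, (f y - mkInt P μ t f) * (g z - mkInt P μ (t + s) g)
    ∂(kpow P s y)) ∂(kpow P t x)) ∂μ

/-- Path covariance `Cov_μ(f(X_m), g(X_n))` of the chain with kernel `P` started at `μ`. -/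
noncomputable def covPath2 (P : Kernel X X) (μ : Measure X) (m n : ℕ) (f g : X → ℝ) : ℝ :=
  ∫ x, (∫ y, (∫ z, (f y - mkInt P μ (min m n) f) * (g z - mkInt P μ (max m n) g)
    ∂(kpow P (max m n - min m n) y)) ∂(kpow P (min m n) x)) ∂μ

section Helpers

lemma le_sub_add' {α : Type*} [MeasurableSpace α] (μ ν : Measure α)
    [IsFiniteMeasure μ] [IsFiniteMeasure ν] : μ ≤ μ - ν + ν := by
  obtain ⟨s, hs, hle, hge⟩ := hahn_decomposition (μ := μ) (ν := ν)
  set d := μ.restrict s - ν.restrict s with hd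
  have hreq : ν.restrict s ≤ μ.restrict s := by
    refine Measure.le_iff.mpr fun t ht => ?_
    rw [Measure.restrict_apply ht, Measure.restrict_apply ht]
    exact hle _ (ht.inter hs) Set.inter_subset_right
  have hdapp : ∀ t, MeasurableSet t → d t = μ (t ∩ s) - ν (t ∩ s) := by
    intro t ht
    rw [hd, Measure.sub_apply ht hreq, Measure.restrict_apply ht, Measure.restrict_apply ht]
  have hmem : μ ≤ d + ν := by
    refine Measure.le_iff.mpr fun t ht => ?_
    have h1 : μ (t ∩ s) + μ (t \ s) = μ t := measure_inter_add_diff t hs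
    have h2 : μ (t \ s) ≤ ν (t \ s) := hge _ (ht.diff hs) (fun x hx => hx.2)
    have h3 : d t + ν t = (μ (t ∩ s) - ν (t ∩ s)) + (ν (t ∩ s) + ν (t \ s)) := by
      rw [hdapp t ht, measure_inter_add_diff t hs]
    have h4 : ν (t ∩ s) ≤ μ (t ∩ s) := hle _ (ht.inter hs) Set.inter_subset_right
    calc μ t = μ (t ∩ s) + μ (t \ s) := h1.symm
      _ ≤ μ (t ∩ s) + ν (t \ s) := by gcongr
      _ = (μ (t ∩ s) - ν (t ∩ s)) + ν (t ∩ s) + ν (t \ s) := by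
          rw [tsub_add_cancel_of_le h4]
      _ = (d + ν) t := by
          simp only [Measure.add_apply, h3, add_assoc]
  have hlb : d ≤ μ - ν := by
    refine le_sInf fun e he => Measure.le_iff.mpr fun t ht => ?_
    simp only [Set.mem_setOf_eq] at he
    have h5 : μ (t ∩ s) ≤ e (t ∩ s) + ν (t ∩ s) := le_trans (he (t ∩ s)) (by simp)
    rw [hdapp t ht]
    calc μ (t ∩ s) - ν (t ∩ s) ≤ e (t ∩ s) := tsub_le_iff_right.mpr h5
      _ ≤ e t := measure_mono Set.inter_subset_left
  calc μ ≤ d + ν := hmem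
    _ ≤ (μ - ν) + ν := add_le_add_left hlb _

variable {π : Measure X} [IsProbabilityMeasure π]

lemma setIntegral_rnd (π μ : Measure X) [IsFiniteMeasure π] [IsFiniteMeasure μ]
    (hac : μ ≪ π) (A : Set X) : ∫ x in A, rnd π μ x ∂π = (μ A).toReal :=
  Measure.setIntegral_toReal_rnDeriv hac A

lemma integral_rnd (π μ : Measure X) [IsFiniteMeasure π] [IsProbabilityMeasure μ]
    (hac : μ ≪ π) : ∫ x, rnd π μ x ∂π = 1 := by
  simp only [rnd]
  rw [Measure.integral_toReal_rnDeriv hac]; simp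

lemma bind_prob (Pe : Kernel X X) [IsMarkovKernel Pe] (μ : Measure X)
    [IsProbabilityMeasure μ] : IsProbabilityMeasure (μ.bind (fun x => Pe x)) := by
  constructor
  rw [Measure.bind_apply MeasurableSet.univ (Kernel.measurable Pe).aemeasurable]
  simp

lemma bind_ac (Pe : Kernel X X) [IsMarkovKernel Pe] (π πe μ : Measure X)
    [IsProbabilityMeasure π] [IsProbabilityMeasure πe]
    (hstate : πe.bind (fun x => Pe x) = πe)
    (hac1 : πe ≪ π) (hac2 : π ≪ πe) (hμ : μ ≪ π) :
    μ.bind (fun x => Pe x) ≪ π := by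
  intro A hA0
  obtain ⟨B, hAB, hB, hB0⟩ := exists_measurable_superset_of_null hA0
  have hBe : πe B = 0 := hac1 hB0
  have h1 : ∫⁻ x, Pe x B ∂πe = 0 := by
    rw [← Measure.bind_apply hB (Kernel.measurable Pe).aemeasurable, hstate]; exact hBe
  have h2 : ∀ᵐ x ∂πe, Pe x B = 0 :=
    (lintegral_eq_zero_iff (Kernel.measurable_coe Pe hB)).mp h1
  have h3 : ∀ᵐ x ∂μ, Pe x B = 0 := hμ (hac2 h2)
  have h4 : (μ.bind (fun x => Pe x)) B = 0 := by
    rw [Measure.bind_apply hB (Kernel.measurable Pe).aemeasurable]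
    exact lintegral_eq_zero_iff (Kernel.measurable_coe Pe hB) |>.mpr h3
  exact le_antisymm (le_trans (measure_mono hAB) h4.le) (by simp)

omit [IsProbabilityMeasure π] in
lemma integral_toLp (f : X → ℝ) (h : MemLp f 2 π) :
    ∫ x, (h.toLp f) x ∂π = ∫ x, f x ∂π :=
  integral_congr_ae (h.coeFn_toLp)

lemma integral_Lp_sub (f g : Lp ℝ 2 π) :
    ∫ x, (f - g) x ∂π = ∫ x, f x ∂π - ∫ x, g x ∂π := by
  rw [integral_congr_ae (Lp.coeFn_sub f g)]
  exact integral_sub ((Lp.memLp f).integrable one_le_two) ((Lp.memLp g).integrable one_le_two)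

omit [IsProbabilityMeasure π] in
lemma contractTe (T Te : Lp ℝ 2 π →L[ℝ] Lp ℝ 2 π) {α ε : ℝ}
    (hge : ∀ f : Lp ℝ 2 π, ∫ x, f x ∂π = 0 → ‖T f‖ ≤ (1 - α) * ‖f‖)
    (hdiff : ‖T - Te‖ ≤ ε) (f : Lp ℝ 2 π) (hf : ∫ x, f x ∂π = 0) :
    ‖Te f‖ ≤ (1 - α + ε) * ‖f‖ := by
  have h1 : ‖(T - Te) f‖ ≤ ε * ‖f‖ :=
    le_trans ((T - Te).le_opNorm f) (mul_le_mul_of_nonneg_right hdiff (norm_nonneg f))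
  have h2 : Te f = T f - (T - Te) f := by simp
  calc ‖Te f‖ = ‖T f - (T - Te) f‖ := by rw [← h2]
    _ ≤ ‖T f‖ + ‖(T - Te) f‖ := norm_sub_le _ _
    _ ≤ (1 - α) * ‖f‖ + ε * ‖f‖ := add_le_add (hge f hf) h1
    _ = (1 - α + ε) * ‖f‖ := by ring

omit [IsProbabilityMeasure π] in
lemma norm_toLp_sub (f g : X → ℝ) (hf : MemLp f 2 π) (hg : MemLp g 2 π) :
    ‖hf.toLp f - hg.toLp g‖ = (eLpNorm (fun x => f x - g x) 2 π).toReal := by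
  rw [Lp.norm_def]
  congr 1
  apply eLpNorm_congr_ae
  filter_upwards [Lp.coeFn_sub (hf.toLp f) (hg.toLp g), hf.coeFn_toLp, hg.coeFn_toLp]
    with x h1 h2 h3
  rw [h1, Pi.sub_apply, h2, h3]

lemma setIntegral_Lp_le (f : Lp ℝ 2 π) (A : Set X) :
    |∫ x in A, f x ∂π| ≤ ‖f‖ := by
  have hint : Integrable f π := (Lp.memLp f).integrable one_le_two
  have h1 : |∫ x in A, f x ∂π| ≤ ∫ x in A, |f x| ∂π := by
    simpa [Real.norm_eq_abs] using
      norm_integral_le_integral_norm (μ := π.restrict A) (f := fun x => f x)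
  have h2 : ∫ x in A, |f x| ∂π ≤ ∫ x, |f x| ∂π := by
    apply setIntegral_le_integral hint.abs
    filter_upwards with x using abs_nonneg _
  have h3 : ∫ x, |f x| ∂π ≤ ‖f‖ := by
    rw [Lp.norm_def]
    have h4 : ∫ x, |f x| ∂π = (eLpNorm f 1 π).toReal := by
      rw [eLpNorm_one_eq_lintegral_enorm,
        ← integral_norm_eq_lintegral_enorm (Lp.aestronglyMeasurable f)]
      simp [Real.norm_eq_abs]
    rw [h4]
    apply ENNReal.toReal_mono (Lp.eLpNorm_ne_top f)
    exact eLpNorm_le_eLpNorm_of_exponent_le one_le_two (Lp.aestronglyMeasurable f)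
  linarith

omit [IsProbabilityMeasure π] in
lemma toLp_congr_meas {μ ν : Measure X} (h : μ = ν)
    (h1 : MemLp (rnd π μ) 2 π) (h2 : MemLp (rnd π ν) 2 π) :
    h1.toLp (rnd π μ) = h2.toLp (rnd π ν) := by subst h; rfl

omit [IsProbabilityMeasure π] in
lemma toLp_bind (Pe : Kernel X X) (Te : Lp ℝ 2 π →L[ℝ] Lp ℝ 2 π) (hTe : ActsOn π Pe Te)
    (μ : Measure X) (hp : IsProbabilityMeasure μ) (hac : μ ≪ π)
    (hm : MemLp (rnd π μ) 2 π) (hm2 : MemLp (rnd π (μ.bind (fun x => Pe x))) 2 π) :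
    hm2.toLp (rnd π (μ.bind (fun x => Pe x))) = Te (hm.toLp (rnd π μ)) :=
  Lp.ext (hm2.coeFn_toLp.trans (hTe μ hp hac hm).symm)

omit [IsProbabilityMeasure π] in
lemma memℒp_bind (Pe : Kernel X X) (Te : Lp ℝ 2 π →L[ℝ] Lp ℝ 2 π) (hTe : ActsOn π Pe Te)
    (μ : Measure X) (hp : IsProbabilityMeasure μ) (hac : μ ≪ π)
    (hm : MemLp (rnd π μ) 2 π) :
    MemLp (rnd π (μ.bind (fun x => Pe x))) 2 π :=
  (Lp.memLp (Te (hm.toLp (rnd π μ)))).ae_eq (hTe μ hp hac hm)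

lemma mIter_zero (P : Kernel X X) (μ : Measure X) : mIter P 0 μ = μ := rfl

lemma mIter_succ (P : Kernel X X) (n : ℕ) (μ : Measure X) :
    mIter P (n + 1) μ = (mIter P n μ).bind (fun x => P x) :=
  Function.iterate_succ_apply' _ _ _

end Helpers

set_option maxHeartbeats 1600000 in
/-- Combined theorem: if `ε < α`, `π ≪ π_ε ≪ π` and `πP_εⁿ → π_ε` in total variation,
then `dπ_ε/dπ ∈ L²(π)` with `1 ≤ ‖π_ε‖₂ ≤ α/√(α²−ε²)`, `‖π − π_ε‖₂ ≤ ε/√(α²−ε²)`, and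
`P_ε` is `L²(π)`-geometrically ergodic with factor `1 − (α − ε)`. -/
theorem stmt6 (π : Measure X) [IsProbabilityMeasure π] (P Pe : Kernel X X)
    [IsMarkovKernel P] [IsMarkovKernel Pe]
    (hstat : π.bind (fun x => P x) = π)
    (α ε : ℝ) (hα0 : 0 < α) (hα1 : α < 1) (hε0 : 0 < ε) (hεα : ε < α)
    (T Te : Lp ℝ 2 π →L[ℝ] Lp ℝ 2 π) (hT : ActsOn π P T) (hTe : ActsOn π Pe Te)
    (hge : IsGeomErg π T α) (hdiff : ‖T - Te‖ ≤ ε)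
    (πe : Measure X) [IsProbabilityMeasure πe] (hstate : πe.bind (fun x => Pe x) = πe)
    (hac1 : πe ≪ π) (hac2 : π ≪ πe)
    (htv : Tendsto (fun n => (mIter Pe n π - πe) Set.univ + (πe - mIter Pe n π) Set.univ)
      atTop (nhds 0)) :
    (MemLp (rnd π πe) 2 π ∧ 1 ≤ (eLpNorm (rnd π πe) 2 π).toReal ∧
      (eLpNorm (rnd π πe) 2 π).toReal ≤ α / Real.sqrt (α ^ 2 - ε ^ 2)) ∧
    d2 π π πe ≤ ε / Real.sqrt (α ^ 2 - ε ^ 2) ∧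
    (∀ μ : Measure X, IsProbabilityMeasure μ → μ ≪ π → MemLp (rnd π μ) 2 π →
      ∀ n : ℕ, d2 π (mIter Pe n μ) πe ≤ (1 - (α - ε)) ^ n * d2 π μ πe) := by
  haveI : SigmaFinite π := inferInstance
  set r : ℝ := 1 - α + ε with hr
  have hr0 : 0 < r := by simp only [hr]; linarith
  have hr1 : r < 1 := by simp only [hr]; linarith
  have hcontr : ∀ f : Lp ℝ 2 π, ∫ x, f x ∂π = 0 → ‖Te f‖ ≤ r * ‖f‖ :=
    contractTe T Te hge hdiff
  -- existence ladder
  have hex : ∀ (μ : Measure X), IsProbabilityMeasure μ → μ ≪ π → MemLp (rnd π μ) 2 π →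
      ∀ n, IsProbabilityMeasure (mIter Pe n μ) ∧ (mIter Pe n μ ≪ π) ∧
        MemLp (rnd π (mIter Pe n μ)) 2 π := by
    intro μ hp hac hm n
    induction n with
    | zero => exact ⟨hp, hac, hm⟩
    | succ n ih =>
      obtain ⟨hp', hac', hm'⟩ := ih
      haveI := hp'
      rw [mIter_succ]
      exact ⟨bind_prob Pe _, bind_ac Pe π πe _ hstate hac1 hac2 hac',
        memℒp_bind Pe Te hTe _ hp' hac' hm'⟩
  -- integrals of densities
  have hmean : ∀ (μ : Measure X) (hp : IsProbabilityMeasure μ) (hac : μ ≪ π)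
      (hm : MemLp (rnd π μ) 2 π), ∫ x, (hm.toLp (rnd π μ)) x ∂π = 1 := by
    intro μ hp hac hm
    haveI := hp
    rw [integral_toLp]
    exact integral_rnd π μ hac
  -- the sequence πPeⁿ in Lp
  have hπac : π ≪ π := Measure.AbsolutelyContinuous.rfl
  have h1mem : MemLp (rnd π π) 2 π := by
    apply (memLp_const (1 : ℝ)).ae_eq
    filter_upwards [Measure.rnDeriv_self π] with x hx
    simp [rnd, hx]
  set F : ℕ → Lp ℝ 2 π :=
    fun n => ((hex π inferInstance hπac h1mem n).2.2).toLp _ with hF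
  have hFsucc : ∀ n, F (n + 1) = Te (F n) := by
    intro n
    obtain ⟨hp', hac', hm'⟩ := hex π inferInstance hπac h1mem n
    have hm2 : MemLp (rnd π ((mIter Pe n π).bind (fun x => Pe x))) 2 π :=
      memℒp_bind Pe Te hTe _ hp' hac' hm'
    calc F (n + 1) = hm2.toLp _ := toLp_congr_meas (mIter_succ Pe n π) _ _
      _ = Te (hm'.toLp _) := toLp_bind Pe Te hTe _ hp' hac' hm' hm2
      _ = Te (F n) := rfl
  have hFmean : ∀ n, ∫ x, (F n) x ∂π = 1 := by
    intro n
    obtain ⟨hp', hac', hm'⟩ := hex π inferInstance hπac h1mem n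
    exact hmean _ hp' hac' _
  -- Cauchy
  have hFdist : ∀ n, dist (F n) (F (n + 1)) ≤ dist (F 0) (F 1) * r ^ n := by
    intro n
    induction n with
    | zero => simp
    | succ n ih =>
      have hz : ∫ x, (F n - F (n + 1)) x ∂π = 0 := by
        rw [integral_Lp_sub, hFmean, hFmean]; ring
      calc dist (F (n + 1)) (F (n + 2)) = ‖F (n + 1) - F (n + 2)‖ := dist_eq_norm _ _
        _ = ‖Te (F n - F (n + 1))‖ := by
            rw [map_sub, ← hFsucc n, ← hFsucc (n + 1)]
        _ ≤ r * ‖F n - F (n + 1)‖ := hcontr _ hz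
        _ = r * dist (F n) (F (n + 1)) := by rw [dist_eq_norm]
        _ ≤ r * (dist (F 0) (F 1) * r ^ n) := by
            exact mul_le_mul_of_nonneg_left ih hr0.le
        _ = dist (F 0) (F 1) * r ^ (n + 1) := by ring
  obtain ⟨G, hG⟩ := cauchySeq_tendsto_of_complete
    (cauchySeq_of_le_geometric r (dist (F 0) (F 1)) hr1 hFdist)
  -- identification of the limit
  have hFA : ∀ n A, MeasurableSet A →
      ∫ x in A, (F n) x ∂π = ((mIter Pe n π) A).toReal := by
    intro n A hA
    obtain ⟨hp', hac', hm'⟩ := hex π inferInstance hπac h1mem n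
    haveI := hp'
    rw [integral_congr_ae (ae_restrict_of_ae hm'.coeFn_toLp)]
    exact setIntegral_rnd π _ hac' A
  have hconv1 : ∀ A, MeasurableSet A →
      Tendsto (fun n => ((mIter Pe n π) A).toReal) atTop (nhds (∫ x in A, G x ∂π)) := by
    intro A hA
    have hnorm : Tendsto (fun n => ‖F n - G‖) atTop (nhds 0) :=
      (tendsto_iff_norm_sub_tendsto_zero).mp hG
    have hbd : ∀ n, |∫ x in A, (F n) x ∂π - ∫ x in A, G x ∂π| ≤ ‖F n - G‖ := by
      intro n
      have h5 : ∫ x in A, (F n - G) x ∂π = ∫ x in A, (F n) x ∂π - ∫ x in A, G x ∂π := by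
        rw [integral_congr_ae (ae_restrict_of_ae (Lp.coeFn_sub (F n) G))]
        exact integral_sub (((Lp.memLp (F n)).integrable one_le_two).integrableOn)
          (((Lp.memLp G).integrable one_le_two).integrableOn)
      rw [← h5]
      exact setIntegral_Lp_le _ A
    have h6 : Tendsto (fun n => ∫ x in A, (F n) x ∂π) atTop (nhds (∫ x in A, G x ∂π)) := by
      rw [tendsto_iff_dist_tendsto_zero]
      refine squeeze_zero (fun n => dist_nonneg) (fun n => ?_) hnorm
      rw [Real.dist_eq]; exact hbd n
    exact h6.congr (fun n => hFA n A hA)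
  have hconv2 : ∀ A, MeasurableSet A →
      Tendsto (fun n => ((mIter Pe n π) A).toReal) atTop (nhds ((πe A).toReal)) := by
    intro A hA
    have hδ : Tendsto (fun n => ((mIter Pe n π - πe) Set.univ
        + (πe - mIter Pe n π) Set.univ).toReal) atTop (nhds 0) := by
      have := (ENNReal.tendsto_toReal (a := 0) (by simp)).comp htv
      simpa [Function.comp_def] using this
    rw [tendsto_iff_dist_tendsto_zero]
    refine squeeze_zero (fun n => dist_nonneg) (fun n => ?_) hδ
    -- pointwise bound
    haveI hpn : IsProbabilityMeasure (mIter Pe n π) :=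
      (hex π inferInstance hπac h1mem n).1
    set μn := mIter Pe n π
    have hf1 : (μn - πe) Set.univ ≠ ⊤ :=
      lt_of_le_of_lt (Measure.sub_le (ν := πe) Set.univ) (by simp) |>.ne
    have hf2 : (πe - μn) Set.univ ≠ ⊤ :=
      lt_of_le_of_lt (Measure.sub_le (ν := μn) Set.univ) (by simp) |>.ne
    have hb1 : μn A ≤ (μn - πe) Set.univ + πe A := by
      calc μn A ≤ ((μn - πe) + πe) A := le_sub_add' μn πe A
        _ = (μn - πe) A + πe A := rfl
        _ ≤ (μn - πe) Set.univ + πe A := by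
            gcongr <;> exact Set.subset_univ A
    have hb2 : πe A ≤ (πe - μn) Set.univ + μn A := by
      calc πe A ≤ ((πe - μn) + μn) A := le_sub_add' πe μn A
        _ = (πe - μn) A + μn A := rfl
        _ ≤ (πe - μn) Set.univ + μn A := by
            gcongr <;> exact Set.subset_univ A
    rw [Real.dist_eq, abs_sub_le_iff]
    have hμnA : μn A ≠ ⊤ := (measure_lt_top μn A).ne
    have hπeA : πe A ≠ ⊤ := (measure_lt_top πe A).ne
    constructor
    · have := ENNReal.toReal_mono (by finiteness) hb1
      rw [ENNReal.toReal_add hf1 hπeA] at this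
      rw [ENNReal.toReal_add hf1 hf2]
      have h0 : 0 ≤ ((πe - μn) Set.univ).toReal := ENNReal.toReal_nonneg
      linarith
    · have := ENNReal.toReal_mono (by finiteness) hb2
      rw [ENNReal.toReal_add hf2 hμnA] at this
      rw [ENNReal.toReal_add hf1 hf2]
      have h0 : 0 ≤ ((μn - πe) Set.univ).toReal := ENNReal.toReal_nonneg
      linarith
  have hGid : rnd π πe =ᵐ[π] ⇑G := by
    apply ae_eq_of_forall_setIntegral_eq_of_sigmaFinite
    · intro s hs _
      exact (Measure.integrable_toReal_rnDeriv).integrableOn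
    · intro s hs _
      exact ((Lp.memLp G).integrable one_le_two).integrableOn
    · intro s hs _
      rw [setIntegral_rnd π πe hac1 s]
      exact tendsto_nhds_unique (hconv2 s hs) (hconv1 s hs)
  have hGmem : MemLp (rnd π πe) 2 π := (Lp.memLp G).ae_eq hGid.symm
  -- the Lp representatives
  set Lhat : Lp ℝ 2 π := hGmem.toLp _ with hLhat
  set E1 : Lp ℝ 2 π := h1mem.toLp _ with hE1
  have hTeL : Te Lhat = Lhat := by
    have h7 := hTe πe inferInstance hac1 hGmem
    rw [hstate] at h7
    exact Lp.ext (h7.trans hGmem.coeFn_toLp.symm)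
  have hTE1 : T E1 = E1 := by
    have h7 := hT π inferInstance hπac h1mem
    rw [hstat] at h7
    exact Lp.ext (h7.trans h1mem.coeFn_toLp.symm)
  have he1 : ⇑E1 =ᵐ[π] (fun _ => (1 : ℝ)) := by
    refine h1mem.coeFn_toLp.trans ?_
    filter_upwards [Measure.rnDeriv_self π] with x hx
    simp [rnd, hx]
  have hE1norm : ‖E1‖ = 1 := by
    rw [hE1, Lp.norm_toLp, eLpNorm_congr_ae
      (show rnd π π =ᵐ[π] (fun _ => (1:ℝ)) by
        filter_upwards [Measure.rnDeriv_self π] with x hx; simp [rnd, hx])]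
    rw [eLpNorm_const (1:ℝ) (by norm_num) (by simp [← Measure.measure_univ_ne_zero])]
    simp
  have hE1int : ∫ x, E1 x ∂π = 1 := hmean π inferInstance hπac h1mem
  have hLint : ∫ x, Lhat x ∂π = 1 := hmean πe inferInstance hac1 hGmem
  set D : Lp ℝ 2 π := Lhat - E1 with hD
  have hDint : ∫ x, D x ∂π = 0 := by
    rw [hD, integral_Lp_sub, hE1int, hLint]; ring
  have hDnorm : α * ‖D‖ ≤ ε * ‖Lhat‖ := by
    have hkey : D = ((Te - T) Lhat) + T D := by
      rw [hD, map_sub, hTE1]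
      simp only [ContinuousLinearMap.sub_apply]
      rw [hTeL]
      abel
    have h8 : ‖(Te - T) Lhat‖ ≤ ε * ‖Lhat‖ := by
      have := ((Te - T).le_opNorm Lhat)
      have h9 : ‖Te - T‖ ≤ ε := by rwa [norm_sub_rev] at hdiff
      nlinarith [norm_nonneg Lhat]
    have h10 : ‖T D‖ ≤ (1 - α) * ‖D‖ := hge D hDint
    have h11 : ‖D‖ ≤ ‖(Te - T) Lhat‖ + ‖T D‖ := by
      calc ‖D‖ = ‖((Te - T) Lhat) + T D‖ := by rw [← hkey]
        _ ≤ _ := norm_add_le _ _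
    linarith
  have horth : ‖Lhat‖ ^ 2 = 1 + ‖D‖ ^ 2 := by
    have h12 : Lhat = E1 + D := by rw [hD]; abel
    have h13 : (inner ℝ E1 D : ℝ) = 0 := by
      rw [L2.inner_def]
      have : ∫ x, (inner ℝ (E1 x) (D x) : ℝ) ∂π = ∫ x, D x ∂π := by
        apply integral_congr_ae
        filter_upwards [he1] with x hx
        simp [RCLike.inner_apply, hx]
      rw [this, hDint]
    calc ‖Lhat‖ ^ 2 = ‖E1 + D‖ ^ 2 := by rw [← h12]
      _ = ‖E1‖ ^ 2 + 2 * (inner ℝ E1 D : ℝ) + ‖D‖ ^ 2 := norm_add_sq_real E1 D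
      _ = 1 + ‖D‖ ^ 2 := by rw [hE1norm, h13]; ring
  -- numeric bounds
  have hs2 : Real.sqrt (α ^ 2 - ε ^ 2) ^ 2 = α ^ 2 - ε ^ 2 :=
    Real.sq_sqrt (by nlinarith)
  have hs0 : 0 < Real.sqrt (α ^ 2 - ε ^ 2) := Real.sqrt_pos.mpr (by nlinarith)
  have ha : 0 ≤ α * ‖D‖ := mul_nonneg hα0.le (norm_nonneg D)
  have hsq : (α * ‖D‖) ^ 2 ≤ (ε * ‖Lhat‖) ^ 2 := by nlinarith [hDnorm, ha]
  have h2 : α ^ 2 * ‖D‖ ^ 2 ≤ ε ^ 2 * (1 + ‖D‖ ^ 2) := by nlinarith [hsq, horth]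
  have hDle : ‖D‖ ≤ ε / Real.sqrt (α ^ 2 - ε ^ 2) := by
    rw [le_div_iff₀ hs0]
    have hsq2 : (‖D‖ * Real.sqrt (α ^ 2 - ε ^ 2)) ^ 2 ≤ ε ^ 2 := by nlinarith [h2, hs2]
    calc ‖D‖ * Real.sqrt (α ^ 2 - ε ^ 2)
        = Real.sqrt ((‖D‖ * Real.sqrt (α ^ 2 - ε ^ 2)) ^ 2) :=
          (Real.sqrt_sq (by positivity)).symm
      _ ≤ Real.sqrt (ε ^ 2) := Real.sqrt_le_sqrt hsq2
      _ = ε := Real.sqrt_sq hε0.le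
  have hLle : ‖Lhat‖ ≤ α / Real.sqrt (α ^ 2 - ε ^ 2) := by
    rw [le_div_iff₀ hs0]
    have hsq2 : (‖Lhat‖ * Real.sqrt (α ^ 2 - ε ^ 2)) ^ 2 ≤ α ^ 2 := by
      nlinarith [h2, hs2, horth]
    calc ‖Lhat‖ * Real.sqrt (α ^ 2 - ε ^ 2)
        = Real.sqrt ((‖Lhat‖ * Real.sqrt (α ^ 2 - ε ^ 2)) ^ 2) :=
          (Real.sqrt_sq (by positivity)).symm
      _ ≤ Real.sqrt (α ^ 2) := Real.sqrt_le_sqrt hsq2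
      _ = α := Real.sqrt_sq hα0.le
  have hLge : 1 ≤ ‖Lhat‖ := by
    have := setIntegral_Lp_le Lhat Set.univ
    rw [setIntegral_univ, hLint] at this
    simpa using this
  have hLnorm : (eLpNorm (rnd π πe) 2 π).toReal = ‖Lhat‖ := (Lp.norm_toLp _ hGmem).symm
  refine ⟨⟨hGmem, by rw [hLnorm]; exact hLge, by rw [hLnorm]; exact hLle⟩, ?_, ?_⟩
  · -- part (ii)
    have : d2 π π πe = ‖E1 - Lhat‖ := (norm_toLp_sub _ _ h1mem hGmem).symm
    rw [this, norm_sub_rev]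
    exact hDle
  · -- part (iii)
    have key : ∀ n (μ : Measure X) (hp : IsProbabilityMeasure μ) (hac : μ ≪ π)
        (hm : MemLp (rnd π μ) 2 π),
        ‖((hex μ hp hac hm n).2.2).toLp _ - Lhat‖ ≤ r ^ n * ‖hm.toLp _ - Lhat‖ := by
      intro n
      induction n with
      | zero =>
        intro μ hp hac hm
        rw [pow_zero, one_mul]
        exact le_of_eq (by rw [toLp_congr_meas (mIter_zero Pe μ)
          ((hex μ hp hac hm 0).2.2) hm])
      | succ n ih =>
        intro μ hp hac hm
        obtain ⟨hp', hac', hm'⟩ := hex μ hp hac hm n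
        have hm2 : MemLp (rnd π ((mIter Pe n μ).bind (fun x => Pe x))) 2 π :=
          memℒp_bind Pe Te hTe _ hp' hac' hm'
        have heq1 : ((hex μ hp hac hm (n+1)).2.2).toLp _ = Te (hm'.toLp _) := by
          rw [toLp_congr_meas (mIter_succ Pe n μ) _ hm2]
          exact toLp_bind Pe Te hTe _ hp' hac' hm' hm2
        have hz : ∫ x, (hm'.toLp _ - Lhat) x ∂π = 0 := by
          rw [integral_Lp_sub, hmean _ hp' hac' hm', hLint]; ring
        calc ‖((hex μ hp hac hm (n+1)).2.2).toLp _ - Lhat‖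
            = ‖Te (hm'.toLp _) - Te Lhat‖ := by rw [heq1, hTeL]
          _ = ‖Te (hm'.toLp _ - Lhat)‖ := by rw [map_sub]
          _ ≤ r * ‖hm'.toLp _ - Lhat‖ := hcontr _ hz
          _ ≤ r * (r ^ n * ‖hm.toLp _ - Lhat‖) := by
              exact mul_le_mul_of_nonneg_left (ih μ hp hac hm) hr0.le
          _ = r ^ (n+1) * ‖hm.toLp _ - Lhat‖ := by ring
    intro μ hp hac hm n
    have hd2a : d2 π (mIter Pe n μ) πe
        = ‖((hex μ hp hac hm n).2.2).toLp _ - Lhat‖ :=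
      (norm_toLp_sub _ _ _ hGmem).symm
    have hd2b : d2 π μ πe = ‖hm.toLp _ - Lhat‖ := (norm_toLp_sub _ _ hm hGmem).symm
    have hrr : 1 - (α - ε) = r := by rw [hr]; ring
    rw [hd2a, hd2b, hrr]
    exact key n μ hp hac hm
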